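/- Let ℓ ≥ 1 be an integer and let H ∈ ℝ^{d×d} be a symmetric positive semidefinite matrix with tr(H) ≤ Υ and ‖H‖₂ ≤ L. Then for p ~ N(0, I_d), ( E (pᵀ H p)^ℓ )^{1/ℓ} ≤ Υ + 2(ℓ−1)L; in particular, if H = ∇²f_x for an L-smooth f with tr(∇²f_x) ≤ Υ, this bound is at most L (d + 2ℓ − 2). -/

import Mathlib

open MeasureTheory Real
open scoped ENNReal NNReal

noncomputable section

/-- The Euclidean space `ℝ^d`. -/
abbrev Euc (d : ℕ) := EuclideanSpace ℝ (Fin d)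

/-- `leapfrog f η k (q₀,p₀)` is the `k`-th leapfrog iterate with step size `η` for the
potential `f`, starting at `(q₀,p₀)`. -/
def leapfrog {d : ℕ} (f : Euc d → ℝ) (η : ℝ) : ℕ → Euc d × Euc d → Euc d × Euc d
  | 0, z => z
  | (k+1), z =>
      let w := leapfrog f η k z
      let q' := w.1 + η • w.2 - (η^2/2) • gradient f w.1
      (q', w.2 - (η/2) • gradient f w.1 - (η/2) • gradient f q')

/-- `f` is `L`-smooth: the Hessian has operator norm at most `L` everywhere. -/
def LSmooth {d : ℕ} (f : Euc d → ℝ) (L : ℝ) : Prop :=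
  ∀ x, ‖fderiv ℝ (gradient f) x‖ ≤ L

/-- The entries of the third-derivative tensor of `f` at `x`. -/
def tensor3 {ι : Type*} [Fintype ι] [DecidableEq ι]
    (f : EuclideanSpace ℝ ι → ℝ) (x : EuclideanSpace ℝ ι) (i j k : ι) : ℝ :=
  iteratedFDeriv ℝ 3 f x
    ![EuclideanSpace.single i 1, EuclideanSpace.single j 1, EuclideanSpace.single k 1]

/-- The `{1,2,3}`-norm (Frobenius norm) of a 3-tensor. -/
def norm123 {ι : Type*} [Fintype ι] (A : ι → ι → ι → ℝ) : ℝ :=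
  Real.sqrt (∑ i, ∑ j, ∑ k, (A i j k)^2)

/-- The `{1,2}{3}`-norm of a 3-tensor. -/
def norm12_3 {ι : Type*} [Fintype ι] (A : ι → ι → ι → ℝ) : ℝ :=
  sSup { s | ∃ (X : ι → ι → ℝ) (y : ι → ℝ), (∑ i, ∑ j, (X i j)^2) ≤ 1 ∧
    (∑ k, (y k)^2) ≤ 1 ∧ s = ∑ i, ∑ j, ∑ k, A i j k * X i j * y k }

/-- `f` is `γ L^{3/2}`-strongly Hessian Lipschitz. -/
def StronglyHessLip {d : ℕ} (f : Euc d → ℝ) (γ L : ℝ) : Prop :=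
  ∀ x, norm12_3 (tensor3 f x) ≤ γ * L ^ ((3:ℝ)/2)

/-- Distance between two sets. -/
def setDistance {α : Type*} [PseudoMetricSpace α] (S T : Set α) : ℝ :=
  sInf { r | ∃ x ∈ S, ∃ y ∈ T, r = dist x y }

/-- Cheeger isoperimetric inequality with coefficient `ψ`. -/
def CheegerIso {d : ℕ} (μ : Measure (Euc d)) (ψ : ℝ) : Prop :=
  ∀ S1 S2 S3 : Set (Euc d), MeasurableSet S1 → MeasurableSet S2 → MeasurableSet S3 →
    Disjoint S1 S2 → Disjoint S1 S3 → Disjoint S2 S3 → S1 ∪ S2 ∪ S3 = Set.univ →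
    ψ * setDistance S1 S2 * (μ S1).toReal * (μ S2).toReal ≤ (μ S3).toReal

/-- The probability measure proportional to `e^{-f}`. -/
def targetMeasure {d : ℕ} (f : Euc d → ℝ) : Measure (Euc d) :=
  ((volume.withDensity fun x => ENNReal.ofReal (Real.exp (-f x))) Set.univ)⁻¹ •
    (volume.withDensity fun x => ENNReal.ofReal (Real.exp (-f x)))

/-- The standard Gaussian measure `N(0, I_d)` on `ℝ^d`. -/
def stdGaussian (d : ℕ) : Measure (Euc d) :=
  Measure.map (⇑(EuclideanSpace.equiv (Fin d) ℝ).symm)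
    (Measure.pi fun _ : Fin d => ProbabilityTheory.gaussianReal 0 1)

/-- Metropolis acceptance probability of the HMC proposal. -/
def accProb {d : ℕ} (f : Euc d → ℝ) (K : ℕ) (η : ℝ) (q p : Euc d) : ℝ :=
  min 1 (Real.exp (-(f (leapfrog f η K (q,p)).1) - ‖(leapfrog f η K (q,p)).2‖^2/2
    + f q + ‖p‖^2/2))

/-- One step of Metropolized HMC with `K` leapfrog steps and step size `η`, from `q`. -/
def hmcKernel {d : ℕ} (f : Euc d → ℝ) (K : ℕ) (η : ℝ) (q : Euc d) : Measure (Euc d) :=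
  (stdGaussian d).bind fun p =>
    ENNReal.ofReal (accProb f K η q p) • Measure.dirac (leapfrog f η K (q,p)).1 +
    ENNReal.ofReal (1 - accProb f K η q p) • Measure.dirac q

/-- One step of the lazy version of Metropolized HMC. -/
def lazyHMC {d : ℕ} (f : Euc d → ℝ) (K : ℕ) (η : ℝ) (q : Euc d) : Measure (Euc d) :=
  (2:ℝ≥0∞)⁻¹ • Measure.dirac q + (2:ℝ≥0∞)⁻¹ • hmcKernel f K η q

/-- The law of the lazy Metropolized HMC chain after `n` steps started from `μ₀`. -/
def hmcIter {d : ℕ} (f : Euc d → ℝ) (K : ℕ) (η : ℝ) (μ0 : Measure (Euc d)) :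
    ℕ → Measure (Euc d)
  | 0 => μ0
  | (n+1) => (hmcIter f K η μ0 n).bind (lazyHMC f K η)

/-- Total variation distance between two measures. -/
def tvDist {α : Type*} [MeasurableSpace α] (P Q : Measure α) : ℝ :=
  sSup { r | ∃ A, MeasurableSet A ∧ r = |(P A).toReal - (Q A).toReal| }

/-- `ε`-mixing time of lazy Metropolized HMC started from `μ₀`, targetting `μ ∝ e^{-f}`. -/
def mixingTime {d : ℕ} (f : Euc d → ℝ) (K : ℕ) (η : ℝ) (μ0 : Measure (Euc d)) (ε : ℝ) : ℕ :=
  sInf { n : ℕ | tvDist (hmcIter f K η μ0 n) (targetMeasure f) ≤ ε }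

/-- `μ₀` is `M`-warm with respect to `μ`. -/
def Warm {α : Type*} [MeasurableSpace α] (μ0 μ : Measure α) (M : ℝ) : Prop :=
  ∀ S : Set α, MeasurableSet S → μ0 S ≤ ENNReal.ofReal M * μ S

/-- `e^{-f}` has subexponential tail. -/
def SubexpTail {d : ℕ} (f : Euc d → ℝ) : Prop :=
  ∃ lam > (0:ℝ), Filter.Tendsto (fun x : Euc d => Real.exp (lam * ‖x‖) * Real.exp (-f x))
    (Bornology.cobounded _) (nhds 0)

end

open scoped RealInnerProductSpace


open MeasureTheory Real Filter ProbabilityTheory MvPolynomial Matrix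

noncomputable section
namespace GQF





/-- Integrability of `x^n * exp(-x²/2)`. -/
lemma integrable_pow_mul_gauss (n : ℕ) :
    Integrable fun x : ℝ => x ^ n * exp (-(1/2:ℝ) * x ^ 2) := by
  have hd : Integrable fun x : ℝ =>
      exp (-(1/2:ℝ) * x ^ 2) + (4:ℝ)^n * n.factorial * exp (-(1/4:ℝ) * x ^ 2) :=
    (integrable_exp_neg_mul_sq (by norm_num)).add
      ((integrable_exp_neg_mul_sq (by norm_num)).const_mul _)
  refine hd.mono' ?_ ?_
  · exact (continuous_pow n |>.mul (by continuity : Continuous fun x : ℝ =>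
      exp (-(1/2:ℝ) * x ^ 2))).aestronglyMeasurable
  · refine Filter.Eventually.of_forall fun x => ?_
    have hxn : |x| ^ n ≤ 1 + (4:ℝ)^n * n.factorial * exp ((1/4:ℝ) * x ^ 2) := by
      rcases le_total (|x|) 1 with h | h
      · have : |x| ^ n ≤ 1 := pow_le_one₀ (abs_nonneg x) h
        nlinarith [mul_pos (mul_pos (pow_pos (by norm_num : (0:ℝ)<4) n)
          (by positivity : (0:ℝ) < n.factorial)) (exp_pos ((1/4:ℝ) * x ^ 2))]
      · have h1 : |x| ^ n ≤ (x^2) ^ n := by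
          calc |x| ^ n ≤ (|x|^2) ^ n := by
                apply pow_le_pow_left₀ (abs_nonneg x) ?_ n
                nlinarith
            _ = (x^2) ^ n := by rw [sq_abs]
        have h2 : ((1/4:ℝ) * x ^ 2) ^ n / n.factorial ≤ exp ((1/4:ℝ) * x ^ 2) := by
          apply Real.pow_div_factorial_le_exp
          positivity
        have h3 : (x^2) ^ n = (4:ℝ)^n * ((1/4:ℝ) * x ^ 2) ^ n := by
          rw [mul_pow, ← mul_assoc, ← mul_pow]; norm_num
        have h4 : ((1/4:ℝ) * x ^ 2) ^ n ≤ n.factorial * exp ((1/4:ℝ) * x ^ 2) := by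
          rw [div_le_iff₀ (by positivity : (0:ℝ) < n.factorial)] at h2
          linarith [h2]
        calc |x| ^ n ≤ (x^2)^n := h1
          _ = (4:ℝ)^n * ((1/4:ℝ) * x ^ 2) ^ n := h3
          _ ≤ (4:ℝ)^n * (n.factorial * exp ((1/4:ℝ) * x ^ 2)) := by
              apply mul_le_mul_of_nonneg_left h4 (by positivity)
          _ ≤ 1 + (4:ℝ)^n * n.factorial * exp ((1/4:ℝ) * x ^ 2) := by
              rw [← mul_assoc]; linarith
    have hno : ‖x ^ n * exp (-(1/2:ℝ) * x ^ 2)‖ = |x|^n * exp (-(1/2:ℝ) * x ^ 2) := by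
      rw [norm_mul, norm_pow, Real.norm_eq_abs, Real.norm_eq_abs,
        abs_of_pos (exp_pos _)]
    rw [hno]
    have key : |x|^n * exp (-(1/2:ℝ) * x ^ 2)
        ≤ exp (-(1/2:ℝ) * x ^ 2) + (4:ℝ)^n * n.factorial * exp (-(1/4:ℝ) * x ^ 2) := by
      have := mul_le_mul_of_nonneg_right hxn (le_of_lt (exp_pos (-(1/2:ℝ) * x ^ 2)))
      calc |x|^n * exp (-(1/2:ℝ) * x ^ 2)
          ≤ (1 + (4:ℝ)^n * n.factorial * exp ((1/4:ℝ) * x ^ 2)) * exp (-(1/2:ℝ) * x ^ 2) := this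
        _ = exp (-(1/2:ℝ) * x ^ 2) + (4:ℝ)^n * n.factorial *
            (exp ((1/4:ℝ) * x ^ 2) * exp (-(1/2:ℝ) * x ^ 2)) := by ring
        _ = exp (-(1/2:ℝ) * x ^ 2) + (4:ℝ)^n * n.factorial * exp (-(1/4:ℝ) * x ^ 2) := by
            rw [← Real.exp_add]; ring_nf
    exact key




lemma tendsto_pow_mul_gauss (k : ℕ) :
    Tendsto (fun x : ℝ => x ^ k * exp (-(1/2:ℝ) * x ^ 2)) (cocompact ℝ) (nhds 0) := by
  have h := tendsto_rpow_abs_mul_exp_neg_mul_sq_cocompact (by norm_num : (0:ℝ) < 1/2) k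
  refine squeeze_zero_norm (fun x => ?_) h
  rw [norm_mul, norm_pow, Real.norm_eq_abs, Real.norm_eq_abs, abs_of_pos (exp_pos _),
    Real.rpow_natCast]

lemma hasDerivAt_gauss (x : ℝ) :
    HasDerivAt (fun y : ℝ => exp (-(1/2:ℝ) * y ^ 2)) (-x * exp (-(1/2:ℝ) * x ^ 2)) x := by
  have h1 : HasDerivAt (fun y : ℝ => -(1/2:ℝ) * y ^ 2) (-x) x := by
    have := (hasDerivAt_pow 2 x).const_mul (-(1/2:ℝ))
    refine this.congr_deriv ?_
    push_cast; ring
  simpa [mul_comm] using h1.exp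

/-- IBP: `∫ x^(m+2) e^{-x²/2} = (m+1) ∫ x^m e^{-x²/2}`. -/
lemma J_rec (m : ℕ) :
    ∫ x : ℝ, x ^ (m+2) * exp (-(1/2:ℝ) * x ^ 2)
      = (m+1) * ∫ x : ℝ, x ^ m * exp (-(1/2:ℝ) * x ^ 2) := by
  set f' : ℝ → ℝ := fun x => x ^ (m+2) * exp (-(1/2:ℝ) * x ^ 2)
    - (m+1) * (x ^ m * exp (-(1/2:ℝ) * x ^ 2)) with hf'
  have hderiv : ∀ x : ℝ, HasDerivAt (fun y : ℝ => -(y^(m+1) * exp (-(1/2:ℝ) * y ^ 2))) (f' x) x := by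
    intro x
    have h2 := ((hasDerivAt_pow (m+1) x).mul (hasDerivAt_gauss x)).neg
    refine h2.congr_deriv ?_
    simp only [hf', Nat.add_sub_cancel]
    push_cast; ring
  have hfi' : Integrable f' :=
    (integrable_pow_mul_gauss (m+2)).sub ((integrable_pow_mul_gauss m).const_mul _)
  have htop : Tendsto (fun y : ℝ => -(y^(m+1) * exp (-(1/2:ℝ) * y ^ 2))) atTop (nhds 0) := by
    have := ((tendsto_pow_mul_gauss (m+1)).mono_left
      (le_sup_right.trans (le_of_eq (cocompact_eq_atBot_atTop (α := ℝ)).symm))).neg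
    simpa using this
  have hbot : Tendsto (fun y : ℝ => -(y^(m+1) * exp (-(1/2:ℝ) * y ^ 2))) atBot (nhds 0) := by
    have := ((tendsto_pow_mul_gauss (m+1)).mono_left
      (le_sup_left.trans (le_of_eq (cocompact_eq_atBot_atTop (α := ℝ)).symm))).neg
    simpa using this
  have h0 := integral_of_hasDerivAt_of_tendsto hderiv hfi' hbot htop
  rw [sub_zero] at h0
  have := integral_sub (integrable_pow_mul_gauss (m+2))
    ((integrable_pow_mul_gauss m).const_mul ((m:ℝ)+1))
  rw [hf'] at h0
  rw [this] at h0
  have := sub_eq_zero.mp h0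
  rw [this, integral_const_mul]

lemma J_one : ∫ x : ℝ, x ^ 1 * exp (-(1/2:ℝ) * x ^ 2) = 0 := by
  have hderiv : ∀ x : ℝ, HasDerivAt (fun y : ℝ => -exp (-(1/2:ℝ) * y ^ 2))
      (x ^ 1 * exp (-(1/2:ℝ) * x ^ 2)) x := by
    intro x
    have := (hasDerivAt_gauss x).neg
    refine this.congr_deriv ?_; ring
  have hfi : Integrable fun x : ℝ => x ^ 1 * exp (-(1/2:ℝ) * x ^ 2) :=
    integrable_pow_mul_gauss 1
  have htop : Tendsto (fun y : ℝ => -exp (-(1/2:ℝ) * y ^ 2)) atTop (nhds 0) := by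
    have := ((tendsto_pow_mul_gauss 0).mono_left
      (le_sup_right.trans (le_of_eq (cocompact_eq_atBot_atTop (α := ℝ)).symm))).neg
    simpa using this
  have hbot : Tendsto (fun y : ℝ => -exp (-(1/2:ℝ) * y ^ 2)) atBot (nhds 0) := by
    have := ((tendsto_pow_mul_gauss 0).mono_left
      (le_sup_left.trans (le_of_eq (cocompact_eq_atBot_atTop (α := ℝ)).symm))).neg
    simpa using this
  have h0 := integral_of_hasDerivAt_of_tendsto hderiv hfi hbot htop
  simpa using h0




/-- The standard 1-dimensional Gaussian. -/
def γ : Measure ℝ := gaussianReal 0 1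

instance : IsProbabilityMeasure γ := by unfold γ; infer_instance

lemma pdf_eq (x : ℝ) : gaussianPDFReal 0 1 x = (√(2 * π))⁻¹ * exp (-(1/2:ℝ) * x ^ 2) := by
  rw [gaussianPDFReal]
  push_cast
  rw [mul_one, sub_zero]
  congr 1
  ring

lemma integral_gamma (f : ℝ → ℝ) :
    ∫ x, f x ∂γ = ∫ x, ((√(2 * π))⁻¹ * exp (-(1/2:ℝ) * x ^ 2)) * f x := by
  rw [γ, gaussianReal_of_var_ne_zero 0 one_ne_zero]
  have hmeas : Measurable fun x => (gaussianPDFReal 0 1 x).toNNReal :=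
    (measurable_gaussianPDFReal 0 1).real_toNNReal
  have : (gaussianPDF 0 1) = fun x => ((gaussianPDFReal 0 1 x).toNNReal : ENNReal) := by
    funext x; rfl
  rw [this, integral_withDensity_eq_integral_smul hmeas]
  congr 1
  funext x
  rw [NNReal.smul_def, smul_eq_mul, Real.coe_toNNReal _ (gaussianPDFReal_nonneg 0 1 x), pdf_eq]

lemma integrable_gamma_iff (f : ℝ → ℝ) :
    Integrable f γ ↔ Integrable (fun x => f x * ((√(2 * π))⁻¹ * exp (-(1/2:ℝ) * x ^ 2))) := by
  rw [γ, gaussianReal_of_var_ne_zero 0 one_ne_zero]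
  rw [integrable_withDensity_iff (measurable_gaussianPDF 0 1)
    (Filter.Eventually.of_forall fun x => ENNReal.ofReal_lt_top)]
  have hx : ∀ x : ℝ, (gaussianPDF 0 1 x).toReal = (√(2 * π))⁻¹ * exp (-(1/2:ℝ) * x ^ 2) := by
    intro x
    rw [gaussianPDF_def]
    simp only [ENNReal.toReal_ofReal (gaussianPDFReal_nonneg 0 1 x)]
    exact pdf_eq x
  constructor <;> intro h <;> refine h.congr (Filter.Eventually.of_forall fun x => ?_) <;>
    simp only [hx]

/-- The `n`-th moment of the standard Gaussian. -/
def mγ (n : ℕ) : ℝ := ∫ x, x ^ n ∂γ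

lemma integrable_pow_gamma (n : ℕ) : Integrable (fun x => x ^ n) γ := by
  rw [integrable_gamma_iff]
  have := (integrable_pow_mul_gauss n).const_mul ((√(2 * π))⁻¹)
  refine this.congr (Filter.Eventually.of_forall fun x => ?_)
  ring

lemma mγ_zero : mγ 0 = 1 := by simp [mγ]

lemma mγ_succ (n : ℕ) : mγ (n + 1) = n * mγ (n - 1) := by
  match n with
  | 0 =>
    simp only [Nat.cast_zero, zero_mul, mγ, integral_gamma]
    rw [show (∫ x, (√(2*π))⁻¹ * exp (-(1/2:ℝ) * x ^ 2) * x ^ 1 ∂(volume : Measure ℝ))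
      = (√(2*π))⁻¹ * ∫ x, x ^ 1 * exp (-(1/2:ℝ) * x ^ 2) ∂(volume : Measure ℝ) by
        rw [← integral_const_mul]; congr 1; funext x; ring]
    rw [J_one]; ring
  | (m+1) =>
    simp only [mγ, integral_gamma, Nat.add_sub_cancel]
    rw [show (∫ x, (√(2*π))⁻¹ * exp (-(1/2:ℝ) * x ^ 2) * x ^ (m+1+1) ∂(volume : Measure ℝ))
      = (√(2*π))⁻¹ * ∫ x, x ^ (m+2) * exp (-(1/2:ℝ) * x ^ 2) ∂(volume : Measure ℝ) by
        rw [← integral_const_mul]; congr 1; funext x; ring]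
    rw [show (∫ x, (√(2*π))⁻¹ * exp (-(1/2:ℝ) * x ^ 2) * x ^ m ∂(volume : Measure ℝ))
      = (√(2*π))⁻¹ * ∫ x, x ^ m * exp (-(1/2:ℝ) * x ^ 2) ∂(volume : Measure ℝ) by
        rw [← integral_const_mul]; congr 1; funext x; ring]
    rw [J_rec m]; push_cast; ring



/-- The product of `d` independent standard Gaussians. -/
def μpi (d : ℕ) : Measure (Fin d → ℝ) := Measure.pi fun _ => γ

instance (d : ℕ) : IsProbabilityMeasure (μpi d) := by unfold μpi; infer_instance

lemma integrable_prod_pi {d : ℕ} {f : Fin d → ℝ → ℝ} (hf : ∀ i, Integrable (f i) γ) :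
    Integrable (fun x : Fin d → ℝ => ∏ i, f i (x i)) (μpi d) := by
  induction d with
  | zero => simp only [Finset.univ_eq_empty, Finset.prod_empty]; exact integrable_const 1
  | succ n ih =>
      have h := ((measurePreserving_piFinSuccAbove (fun _ : Fin (n+1) => γ) 0).symm)
      rw [μpi, ← h.integrable_comp_emb (MeasurableEquiv.measurableEmbedding _)]
      simp_rw [MeasurableEquiv.piFinSuccAbove_symm_apply, Fin.insertNthEquiv,
        Fin.prod_univ_succ, Fin.insertNth_zero]
      simp only [Fin.zero_succAbove, Function.comp_def, Fin.cons_zero, Fin.cons_succ]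
      have h2 : Integrable (fun x : Fin n → ℝ => ∏ j, f (Fin.succ j) (x j)) (μpi n) :=
        ih (fun i => hf _)
      exact Integrable.mul_prod (hf 0) h2

lemma integral_prod_pi {d : ℕ} (f : Fin d → ℝ → ℝ) :
    ∫ x, ∏ i, f i (x i) ∂(μpi d) = ∏ i, ∫ x, f i x ∂γ := by
  induction d with
  | zero => simp
  | succ n ih =>
      have h := ((measurePreserving_piFinSuccAbove (fun _ : Fin (n+1) => γ) 0).symm)
      rw [μpi, ← h.integral_comp']
      simp_rw [MeasurableEquiv.piFinSuccAbove_symm_apply, Fin.insertNthEquiv,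
        Fin.prod_univ_succ, Fin.insertNth_zero]
      simp only [Fin.zero_succAbove, Fin.cons_zero, Fin.cons_succ, Equiv.coe_fn_mk]
      rw [show ((Measure.pi fun _ : Fin n => γ)) = μpi n from rfl] at *
      rw [← ih fun i => f (Fin.succ i), ← integral_prod_mul (μ := γ) (ν := μpi n)
        (f := f 0) (g := fun x : Fin n → ℝ => ∏ j, f (Fin.succ j) (x j))]
      rfl


variable {d : ℕ}


/-- Gaussian expectation of a polynomial. -/
def Ig (P : MvPolynomial (Fin d) ℝ) : ℝ := ∫ x, eval x P ∂(μpi d)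

lemma integrable_eval (P : MvPolynomial (Fin d) ℝ) :
    Integrable (fun x : Fin d → ℝ => eval x P) (μpi d) := by
  have h : (fun x : Fin d → ℝ => eval x P)
      = fun x => ∑ k ∈ P.support, P.coeff k * ∏ i, (x i) ^ (k i) := by
    funext x; exact eval_eq' x P
  rw [h]
  exact integrable_finset_sum _ fun k _ =>
    (integrable_prod_pi fun i => integrable_pow_gamma (k i)).const_mul _

lemma Ig_monomial (k : Fin d →₀ ℕ) (c : ℝ) :
    Ig (monomial k c) = c * ∏ i, mγ (k i) := by
  unfold Ig
  have h : (fun x : Fin d → ℝ => eval x (monomial k c))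
      = fun x => c * ∏ i, (x i) ^ (k i) := by
    funext x
    rw [eval_monomial, Finsupp.prod_fintype]
    intro i; exact pow_zero _
  rw [h, integral_const_mul, integral_prod_pi fun i x => x ^ (k i)]
  rfl

lemma Ig_sum {A : Type*} (s : Finset A) (F : A → MvPolynomial (Fin d) ℝ) :
    Ig (∑ a ∈ s, F a) = ∑ a ∈ s, Ig (F a) := by
  classical
  induction s using Finset.induction_on with
  | empty => simp [Ig]
  | insert a s hnotmem ih =>
      rw [Finset.sum_insert hnotmem, Finset.sum_insert hnotmem, ← ih]
      unfold Ig
      simp_rw [map_add]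
      rw [integral_add (integrable_eval _) (integrable_eval _)]

lemma Ig_add (P Q : MvPolynomial (Fin d) ℝ) : Ig (P + Q) = Ig P + Ig Q := by
  unfold Ig
  simp_rw [map_add]
  exact integral_add (integrable_eval P) (integrable_eval Q)

lemma Ig_Cmul (c : ℝ) (P : MvPolynomial (Fin d) ℝ) : Ig (C c * P) = c * Ig P := by
  unfold Ig
  simp_rw [_root_.map_mul, eval_C]
  rw [integral_const_mul]

lemma Ig_mono {P Q : MvPolynomial (Fin d) ℝ} (h : ∀ x, eval x P ≤ eval x Q) :
    Ig P ≤ Ig Q :=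
  integral_mono (integrable_eval P) (integrable_eval Q) h

lemma Ig_nonneg {P : MvPolynomial (Fin d) ℝ} (h : ∀ x, 0 ≤ eval x P) : 0 ≤ Ig P :=
  integral_nonneg h

lemma Ig_one : Ig (1 : MvPolynomial (Fin d) ℝ) = 1 := by
  unfold Ig; simp

/-- Stein's identity for monomials. -/
lemma Ig_X_mul_monomial (i : Fin d) (k : Fin d →₀ ℕ) (c : ℝ) :
    Ig (X i * monomial k c) = Ig (pderiv i (monomial k c)) := by
  classical
  rw [show (X i * monomial k c : MvPolynomial (Fin d) ℝ)
      = monomial (Finsupp.single i 1 + k) c by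
    rw [monomial_single_add, pow_one]]
  rw [pderiv_monomial, Ig_monomial, Ig_monomial]
  have h1 : ∏ j, mγ ((Finsupp.single i 1 + k : Fin d →₀ ℕ) j)
      = mγ (k i + 1) * ∏ j ∈ Finset.univ.erase i, mγ (k j) := by
    rw [← Finset.mul_prod_erase Finset.univ _ (Finset.mem_univ i)]
    congr 1
    · rw [Finsupp.add_apply, Finsupp.single_eq_same, add_comm]
    · refine Finset.prod_congr rfl fun j hj => ?_
      rw [Finsupp.add_apply, Finsupp.single_eq_of_ne' (Ne.symm (Finset.mem_erase.mp hj).1),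
        zero_add]
  have h2 : ∏ j, mγ ((k - Finsupp.single i 1 : Fin d →₀ ℕ) j)
      = mγ (k i - 1) * ∏ j ∈ Finset.univ.erase i, mγ (k j) := by
    rw [← Finset.mul_prod_erase Finset.univ _ (Finset.mem_univ i)]
    congr 1
    · rw [Finsupp.tsub_apply, Finsupp.single_eq_same]
    · refine Finset.prod_congr rfl fun j hj => ?_
      rw [Finsupp.tsub_apply, Finsupp.single_eq_of_ne' (Ne.symm (Finset.mem_erase.mp hj).1),
        Nat.sub_zero]
  rw [h1, h2, mγ_succ (k i)]
  ring

/-- Stein's identity. -/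
lemma Ig_X_mul (i : Fin d) (P : MvPolynomial (Fin d) ℝ) :
    Ig (X i * P) = Ig (pderiv i P) := by
  conv_lhs => rw [← support_sum_monomial_coeff P]
  conv_rhs => rw [← support_sum_monomial_coeff P]
  rw [Finset.mul_sum, map_sum (pderiv i), Ig_sum, Ig_sum]
  exact Finset.sum_congr rfl fun k _ => Ig_X_mul_monomial i k _



lemma Ig_zero : Ig (0 : MvPolynomial (Fin d) ℝ) = 0 := by
  have h := Ig_Cmul (0:ℝ) (0 : MvPolynomial (Fin d) ℝ)
  simpa using h

/-- The quadratic form of `H` as a polynomial. -/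
def Qp (H : Matrix (Fin d) (Fin d) ℝ) : MvPolynomial (Fin d) ℝ := ∑ i, ∑ j, C (H i j) * X i * X j

/-- The quadratic form of `HᵀH` as a polynomial. -/
def Rp (H : Matrix (Fin d) (Fin d) ℝ) : MvPolynomial (Fin d) ℝ := ∑ j, ∑ k, C (∑ i, H i j * H i k) * X j * X k

lemma Ig_Q_mul (H : Matrix (Fin d) (Fin d) ℝ) (P : MvPolynomial (Fin d) ℝ) :
    Ig (Qp H * P) = H.trace * Ig P + ∑ i, ∑ j, H i j * Ig (X j * pderiv i P) := by
  classical
  have h1 : Qp H * P = ∑ i, ∑ j, C (H i j) * (X i * (X j * P)) := by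
    rw [Qp, Finset.sum_mul]
    refine Finset.sum_congr rfl fun i _ => ?_
    rw [Finset.sum_mul]
    exact Finset.sum_congr rfl fun j _ => by ring
  have h2 : ∀ i j : Fin d, Ig (C (H i j) * (X i * (X j * P)))
      = H i j * Ig ((Pi.single (M := fun _ : Fin d => MvPolynomial (Fin d) ℝ) i 1 j) * P)
        + H i j * Ig (X j * pderiv i P) := by
    intro i j
    rw [Ig_Cmul, Ig_X_mul, pderiv_mul, pderiv_X, Ig_add]
    ring
  rw [h1, Ig_sum]
  simp_rw [Ig_sum, h2, Finset.sum_add_distrib]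
  congr 1
  have h3 : ∀ i : Fin d,
      (∑ j, H i j * Ig ((Pi.single (M := fun _ : Fin d => MvPolynomial (Fin d) ℝ) i 1 j) * P))
        = H i i * Ig P := by
    intro i
    rw [Finset.sum_eq_single i]
    · rw [Pi.single_eq_same, one_mul]
    · intro j _ hj
      rw [Pi.single_eq_of_ne hj, zero_mul, Ig_zero, mul_zero]
    · intro h; exact absurd (Finset.mem_univ i) h
  rw [Finset.sum_congr rfl fun i _ => h3 i, Matrix.trace, Finset.sum_mul]
  rfl

lemma pderiv_Qp (H : Matrix (Fin d) (Fin d) ℝ) (hs : H.IsSymm) (i : Fin d) :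
    pderiv i (Qp H) = C 2 * ∑ k, C (H i k) * X k := by
  classical
  have e1 : ∀ a j : Fin d, pderiv i (C (H a j) * X a * X j)
      = C (H a j) * ((Pi.single (M := fun _ : Fin d => MvPolynomial (Fin d) ℝ) i 1 a) * X j)
        + C (H a j) * (X a * (Pi.single (M := fun _ : Fin d => MvPolynomial (Fin d) ℝ) i 1 j)) := by
    intro a j
    rw [mul_assoc, pderiv_C_mul, pderiv_mul, pderiv_X, pderiv_X]
    ring
  rw [Qp, map_sum]
  simp_rw [map_sum, e1, Finset.sum_add_distrib]
  have t1 : (∑ a, ∑ j, C (H a j) * ((Pi.single (M := fun _ : Fin d => MvPolynomial (Fin d) ℝ) i 1 a) * X j))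
      = ∑ j, C (H i j) * X j := by
    rw [Finset.sum_eq_single i]
    · exact Finset.sum_congr rfl fun j _ => by rw [Pi.single_eq_same]; ring
    · intro a _ ha
      exact Finset.sum_eq_zero fun j _ => by rw [Pi.single_eq_of_ne ha]; ring
    · intro h; exact absurd (Finset.mem_univ i) h
  have t2 : (∑ a, ∑ j, C (H a j) * (X a * (Pi.single (M := fun _ : Fin d => MvPolynomial (Fin d) ℝ) i 1 j)))
      = ∑ a, C (H a i) * X a := by
    refine Finset.sum_congr rfl fun a _ => ?_
    rw [Finset.sum_eq_single i]
    · rw [Pi.single_eq_same]; ring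
    · intro j _ hj; rw [Pi.single_eq_of_ne hj]; ring
    · intro h; exact absurd (Finset.mem_univ i) h
  rw [t1, t2, Finset.mul_sum, ← Finset.sum_add_distrib]
  refine Finset.sum_congr rfl fun k _ => ?_
  rw [hs.apply i k, show (C (2:ℝ) : MvPolynomial (Fin d) ℝ) = 2 from map_ofNat _ 2]
  ring

/-- Stein recursion for powers of the quadratic form. -/
lemma stein_rec (H : Matrix (Fin d) (Fin d) ℝ) (hs : H.IsSymm) (m : ℕ) :
    Ig (Qp H ^ (m+1)) = H.trace * Ig (Qp H ^ m)
      + 2 * m * Ig (Rp H * Qp H ^ (m - 1)) := by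
  classical
  rw [pow_succ, mul_comm (Qp H ^ m) (Qp H), Ig_Q_mul]
  congr 1
  have hp : ∀ i : Fin d, pderiv i (Qp H ^ m)
      = (m : MvPolynomial (Fin d) ℝ) * Qp H ^ (m-1) * (C 2 * ∑ k, C (H i k) * X k) := by
    intro i
    rw [pderiv_pow, pderiv_Qp H hs]
  have h4 : ∀ i j : Fin d, Ig (X j * pderiv i (Qp H ^ m))
      = ∑ k, (2 * m * H i k) * Ig (X j * (X k * Qp H ^ (m-1))) := by
    intro i j
    rw [hp i]
    have : X j * ((m : MvPolynomial (Fin d) ℝ) * Qp H ^ (m-1) * (C 2 * ∑ k, C (H i k) * X k))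
        = ∑ k, C (2 * m * H i k) * (X j * (X k * Qp H ^ (m-1))) := by
      rw [Finset.mul_sum, Finset.mul_sum, Finset.mul_sum]
      refine Finset.sum_congr rfl fun k _ => ?_
      rw [_root_.map_mul, _root_.map_mul, show (C (2:ℝ) : MvPolynomial (Fin d) ℝ) = 2 from map_ofNat _ 2,
        show (C ((m:ℕ):ℝ) : MvPolynomial (Fin d) ℝ) = (m : MvPolynomial (Fin d) ℝ) by
          rw [MvPolynomial.C_eq_coe_nat]]
      ring
    rw [this, Ig_sum]
    exact Finset.sum_congr rfl fun k _ => Ig_Cmul _ _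
  simp_rw [h4]
  have h5 : Rp H * Qp H ^ (m-1)
      = ∑ j, ∑ k, C (∑ i, H i j * H i k) * (X j * (X k * Qp H ^ (m-1))) := by
    rw [Rp, Finset.sum_mul]
    refine Finset.sum_congr rfl fun j _ => ?_
    rw [Finset.sum_mul]
    exact Finset.sum_congr rfl fun k _ => by ring
  rw [h5, Ig_sum]
  simp_rw [Ig_sum, Ig_Cmul]
  rw [Finset.mul_sum, Finset.sum_comm]
  refine Finset.sum_congr rfl fun j _ => ?_
  calc (∑ x, H x j * ∑ k, 2 * (m:ℝ) * H x k * Ig (X j * (X k * Qp H ^ (m - 1))))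
      = ∑ x, ∑ k, H x j * (2 * (m:ℝ) * H x k * Ig (X j * (X k * Qp H ^ (m - 1)))) := by
        simp_rw [Finset.mul_sum]
    _ = ∑ k, ∑ x, H x j * (2 * (m:ℝ) * H x k * Ig (X j * (X k * Qp H ^ (m - 1)))) :=
        Finset.sum_comm
    _ = ∑ k, 2 * (m:ℝ) * ((∑ i, H i j * H i k) * Ig (X j * (X k * Qp H ^ (m - 1)))) := by
        refine Finset.sum_congr rfl fun k _ => ?_
        rw [Finset.sum_mul, Finset.mul_sum]
        exact Finset.sum_congr rfl fun i _ => by ring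
    _ = 2 * (m:ℝ) * ∑ k, (∑ i, H i j * H i k) * Ig (X j * (X k * Qp H ^ (m - 1))) := by
        rw [Finset.mul_sum]



lemma eval_Qp (H : Matrix (Fin d) (Fin d) ℝ) (x : Fin d → ℝ) : eval x (Qp H) = x ⬝ᵥ (H *ᵥ x) := by
  rw [Qp, map_sum]
  calc (∑ i, eval x (∑ j, C (H i j) * X i * X j))
      = ∑ i, ∑ j, H i j * x i * x j := by
        refine Finset.sum_congr rfl fun i _ => ?_
        rw [map_sum]
        refine Finset.sum_congr rfl fun j _ => ?_
        rw [_root_.map_mul, _root_.map_mul, eval_C, eval_X, eval_X]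
    _ = x ⬝ᵥ (H *ᵥ x) := by
        simp only [dotProduct, Matrix.mulVec, Finset.mul_sum]
        refine Finset.sum_congr rfl fun i _ => Finset.sum_congr rfl fun j _ => by ring

lemma eval_Rp (H : Matrix (Fin d) (Fin d) ℝ) (x : Fin d → ℝ) : eval x (Rp H) = (H *ᵥ x) ⬝ᵥ (H *ᵥ x) := by
  rw [Rp, map_sum]
  calc (∑ j, eval x (∑ k, C (∑ i, H i j * H i k) * X j * X k))
      = ∑ j, ∑ k, (∑ i, H i j * H i k) * x j * x k := by
        refine Finset.sum_congr rfl fun j _ => ?_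
        rw [map_sum]
        refine Finset.sum_congr rfl fun k _ => ?_
        rw [_root_.map_mul, _root_.map_mul, eval_C, eval_X, eval_X]
    _
      = ∑ j, ∑ k, ∑ i, (H i j * x j) * (H i k * x k) := by
        refine Finset.sum_congr rfl fun j _ => Finset.sum_congr rfl fun k _ => ?_
        rw [Finset.sum_mul, Finset.sum_mul]
        exact Finset.sum_congr rfl fun i _ => by ring
    _ = ∑ j, ∑ i, ∑ k, (H i j * x j) * (H i k * x k) :=
        Finset.sum_congr rfl fun j _ => Finset.sum_comm
    _ = ∑ i, ∑ j, ∑ k, (H i j * x j) * (H i k * x k) := Finset.sum_comm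
    _ = ∑ i, (∑ j, H i j * x j) * (∑ k, H i k * x k) := by
        refine Finset.sum_congr rfl fun i _ => ?_
        rw [Finset.sum_mul_sum]
    _ = (H *ᵥ x) ⬝ᵥ (H *ᵥ x) := by
        simp [dotProduct, Matrix.mulVec]

lemma inner_eq_dot (v w : Fin d → ℝ) :
    (inner ℝ ((WithLp.equiv 2 (Fin d → ℝ)).symm v) ((WithLp.equiv 2 (Fin d → ℝ)).symm w) : ℝ)
      = v ⬝ᵥ w := by
  simp [PiLp.inner_apply, RCLike.inner_apply, dotProduct,
    mul_comm]

lemma qb {H : Matrix (Fin d) (Fin d) ℝ} {L : ℝ} (hop : ‖LinearMap.toContinuousLinearMap (Matrix.toEuclideanLin H)‖ ≤ L) (v : Fin d → ℝ) : v ⬝ᵥ (H *ᵥ v) ≤ L * (v ⬝ᵥ v) := by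
  set T := LinearMap.toContinuousLinearMap (Matrix.toEuclideanLin H) with hT
  set p := (WithLp.equiv 2 (Fin d → ℝ)).symm v with hp
  have hTp : T p = (WithLp.equiv 2 (Fin d → ℝ)).symm (H *ᵥ v) := by
    rw [hT, hp, LinearMap.coe_toContinuousLinearMap']
    exact Matrix.toEuclideanLin_apply_piLp_toLp H v
  have h1 : v ⬝ᵥ (H *ᵥ v) = (inner ℝ p (T p) : ℝ) := by
    rw [hTp, inner_eq_dot]
  rw [h1]
  have h2 : (inner ℝ p (T p) : ℝ) ≤ ‖p‖ * ‖T p‖ := real_inner_le_norm p (T p)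
  have h3 : ‖T p‖ ≤ L * ‖p‖ := le_trans (T.le_opNorm p)
    (mul_le_mul_of_nonneg_right hop (norm_nonneg p))
  have h4 : ‖p‖ * ‖T p‖ ≤ L * (‖p‖ * ‖p‖) := by
    calc ‖p‖ * ‖T p‖ ≤ ‖p‖ * (L * ‖p‖) :=
          mul_le_mul_of_nonneg_left h3 (norm_nonneg p)
      _ = L * (‖p‖ * ‖p‖) := by ring
  have h5 : ‖p‖ * ‖p‖ = v ⬝ᵥ v := by
    rw [← real_inner_self_eq_norm_mul_norm, inner_eq_dot]
  linarith [h2, h4, h5 ▸ h4]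

lemma psd0 {H : Matrix (Fin d) (Fin d) ℝ} (hpsd : H.PosSemidef) (v : Fin d → ℝ) : 0 ≤ v ⬝ᵥ (H *ᵥ v) := by
  have := hpsd.dotProduct_mulVec_nonneg v
  simpa using this

lemma dotB {B : Matrix (Fin d) (Fin d) ℝ} (hB : B.IsHermitian) (u w : Fin d → ℝ) :
    (B *ᵥ u) ⬝ᵥ w = u ⬝ᵥ (B *ᵥ w) := by
  have hBs : ∀ a b, B a b = B b a := by
    intro a b
    have := congrFun (congrFun hB.eq a) b
    simpa [Matrix.conjTranspose_apply] using this.symm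
  calc (B *ᵥ u) ⬝ᵥ w = ∑ a, (∑ b, B a b * u b) * w a := by
        simp [dotProduct, Matrix.mulVec]
    _ = ∑ a, ∑ b, B a b * u b * w a := by
        exact Finset.sum_congr rfl fun a _ => by rw [Finset.sum_mul]
    _ = ∑ b, ∑ a, B a b * u b * w a := Finset.sum_comm
    _ = u ⬝ᵥ (B *ᵥ w) := by
        simp only [dotProduct, Matrix.mulVec]
        refine Finset.sum_congr rfl fun b _ => ?_
        rw [show (∑ a, B b a * w a) = ∑ a, B a b * w a from
          Finset.sum_congr rfl fun a _ => by rw [hBs b a]]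
        rw [Finset.mul_sum]
        exact Finset.sum_congr rfl fun a _ => by ring

open scoped MatrixOrder in
lemma key {H : Matrix (Fin d) (Fin d) ℝ} {L : ℝ} (hop : ‖LinearMap.toContinuousLinearMap (Matrix.toEuclideanLin H)‖ ≤ L) (hpsd : H.PosSemidef) (v : Fin d → ℝ) : (H *ᵥ v) ⬝ᵥ (H *ᵥ v) ≤ L * (v ⬝ᵥ (H *ᵥ v)) := by
  set B := CFC.sqrt H with hBdef
  have hB : B.PosSemidef := (CFC.sqrt_nonneg H).posSemidef
  have hBB : B * B = H := CFC.sqrt_mul_sqrt_self H hpsd.nonneg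
  have hHv : H *ᵥ v = B *ᵥ (B *ᵥ v) := by rw [Matrix.mulVec_mulVec, hBB]
  calc (H *ᵥ v) ⬝ᵥ (H *ᵥ v) = (B *ᵥ (B *ᵥ v)) ⬝ᵥ (H *ᵥ v) := by rw [← hHv]
    _ = (B *ᵥ v) ⬝ᵥ (B *ᵥ (H *ᵥ v)) := dotB hB.1 _ _
    _ = (B *ᵥ v) ⬝ᵥ (H *ᵥ (B *ᵥ v)) := by
        have hcomm : B * H = H * B := by
          rw [← hBB, Matrix.mul_assoc]
        rw [Matrix.mulVec_mulVec, Matrix.mulVec_mulVec, hcomm]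
    _ ≤ L * ((B *ᵥ v) ⬝ᵥ (B *ᵥ v)) := qb hop (B *ᵥ v)
    _ = L * (v ⬝ᵥ (H *ᵥ v)) := by
        rw [dotB hB.1 v (B *ᵥ v), Matrix.mulVec_mulVec, hBB]

lemma diag_nonneg {H : Matrix (Fin d) (Fin d) ℝ} (hpsd : H.PosSemidef) (i : Fin d) : 0 ≤ H i i := by
  have := psd0 hpsd (Pi.single i 1)
  simpa [Matrix.mulVec_single, single_dotProduct] using this

lemma diag_le {H : Matrix (Fin d) (Fin d) ℝ} {L : ℝ} (hop : ‖LinearMap.toContinuousLinearMap (Matrix.toEuclideanLin H)‖ ≤ L) (i : Fin d) : H i i ≤ L := by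
  have h := qb hop (Pi.single i 1)
  simpa [Matrix.mulVec_single, single_dotProduct, dotProduct_single]
    using h

lemma trace_nonneg' {H : Matrix (Fin d) (Fin d) ℝ} (hpsd : H.PosSemidef) : 0 ≤ H.trace := by
  rw [Matrix.trace]
  exact Finset.sum_nonneg fun i _ => diag_nonneg hpsd i

lemma trace_le_dL {H : Matrix (Fin d) (Fin d) ℝ} {L : ℝ} (hop : ‖LinearMap.toContinuousLinearMap (Matrix.toEuclideanLin H)‖ ≤ L) : H.trace ≤ d * L := by
  rw [Matrix.trace]
  calc (∑ i, H.diag i) ≤ ∑ _i : Fin d, L :=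
        Finset.sum_le_sum fun i _ => diag_le hop i
    _ = d * L := by simp [Finset.sum_const, nsmul_eq_mul]



lemma IgQ_nonneg {H : Matrix (Fin d) (Fin d) ℝ} (hpsd : H.PosSemidef) (m : ℕ) : 0 ≤ Ig (Qp H ^ m) :=
  Ig_nonneg fun x => by
    rw [map_pow, eval_Qp]
    exact pow_nonneg (psd0 hpsd x) m

lemma rec_ineq {H : Matrix (Fin d) (Fin d) ℝ} {L : ℝ} (hs : H.IsSymm) (hpsd : H.PosSemidef)
    (hop : ‖LinearMap.toContinuousLinearMap (Matrix.toEuclideanLin H)‖ ≤ L) (m : ℕ) :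
    Ig (Qp H ^ (m+1)) ≤ (H.trace + 2*m*L) * Ig (Qp H ^ m) := by
  rw [stein_rec H hs m]
  have cross : 2*(m:ℝ) * Ig (Rp H * Qp H ^ (m-1)) ≤ 2*(m:ℝ) * (L * Ig (Qp H ^ m)) := by
    rcases Nat.eq_zero_or_pos m with hm | hm
    · subst hm; simp
    · obtain ⟨k, rfl⟩ : ∃ k, m = k+1 := ⟨m-1, (Nat.succ_pred_eq_of_pos hm).symm⟩
      have hmono : Ig (Rp H * Qp H ^ k) ≤ L * Ig (Qp H ^ (k+1)) := by
        have h := Ig_mono (P := Rp H * Qp H ^ k) (Q := C L * Qp H ^ (k+1)) ?_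
        · rwa [Ig_Cmul] at h
        · intro x
          rw [_root_.map_mul, _root_.map_mul, map_pow, map_pow, eval_C, eval_Rp, eval_Qp]
          calc ((H *ᵥ x) ⬝ᵥ (H *ᵥ x)) * (x ⬝ᵥ (H *ᵥ x))^k
              ≤ (L * (x ⬝ᵥ (H *ᵥ x))) * (x ⬝ᵥ (H *ᵥ x))^k :=
                mul_le_mul_of_nonneg_right (key hop hpsd x) (pow_nonneg (psd0 hpsd x) k)
            _ = L * (x ⬝ᵥ (H *ᵥ x))^(k+1) := by rw [pow_succ]; ring
      have h2 : (0:ℝ) ≤ 2*((k:ℝ)+1) := by positivity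
      have := mul_le_mul_of_nonneg_left hmono h2
      simpa [Nat.add_sub_cancel] using this
  have hexp : (H.trace + 2*(m:ℝ)*L) * Ig (Qp H ^ m)
      = H.trace * Ig (Qp H ^ m) + 2*(m:ℝ) * (L * Ig (Qp H ^ m)) := by ring
  rw [hexp]
  linarith [cross]

lemma pow_bound {H : Matrix (Fin d) (Fin d) ℝ} {L : ℝ} (hs : H.IsSymm) (hpsd : H.PosSemidef)
    (hop : ‖LinearMap.toContinuousLinearMap (Matrix.toEuclideanLin H)‖ ≤ L)
    (hL : 0 ≤ L) (C : ℝ) (hC : 0 ≤ C) (htrC : H.trace ≤ C) :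
    ∀ ℓ : ℕ, Ig (Qp H ^ ℓ) ≤ (C + 2*((ℓ-1 : ℕ):ℝ)*L)^ℓ := by
  intro ℓ
  induction ℓ with
  | zero => rw [pow_zero, Ig_one, pow_zero]
  | succ m ih =>
      have h1 := rec_ineq hs hpsd hop m
      have hfacnn : (0:ℝ) ≤ C + 2*((m:ℝ))*L := by positivity
      have hprev : ((m-1:ℕ):ℝ) ≤ (m:ℝ) := by
        exact_mod_cast Nat.cast_le.mpr (Nat.sub_le m 1)
      have hfac : H.trace + 2*(m:ℝ)*L ≤ C + 2*(m:ℝ)*L := by linarith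
      have hbase_nn : (0:ℝ) ≤ C + 2*((m-1:ℕ):ℝ)*L := by positivity
      have hbase_le : C + 2*((m-1:ℕ):ℝ)*L ≤ C + 2*(m:ℝ)*L := by nlinarith
      calc Ig (Qp H ^ (m+1)) ≤ (H.trace + 2*(m:ℝ)*L) * Ig (Qp H ^ m) := h1
        _ ≤ (C + 2*(m:ℝ)*L) * (C + 2*((m-1:ℕ):ℝ)*L)^m :=
            mul_le_mul hfac ih (IgQ_nonneg hpsd m) hfacnn
        _ ≤ (C + 2*(m:ℝ)*L) * (C + 2*(m:ℝ)*L)^m :=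
            mul_le_mul_of_nonneg_left (pow_le_pow_left₀ hbase_nn hbase_le m) hfacnn
        _ = (C + 2*((m+1-1:ℕ):ℝ)*L)^(m+1) := by
            rw [Nat.add_sub_cancel, pow_succ]
            ring


end GQF
end
/-- **Lemma (Gaussian quadratic form moment bound).** -/
theorem gaussian_quadratic_form_moment_bound {d : ℕ} (H : Matrix (Fin d) (Fin d) ℝ)
    (L Υ : ℝ) (ℓ : ℕ) (hℓ : 1 ≤ ℓ) (hsymm : H.IsSymm) (hpsd : H.PosSemidef)
    (htr : H.trace ≤ Υ)
    (hop : ‖LinearMap.toContinuousLinearMap (Matrix.toEuclideanLin H)‖ ≤ L) :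
    (∫⁻ p : Euc d, ENNReal.ofReal ((⟪p, Matrix.toEuclideanLin H p⟫) ^ ℓ)
        ∂(stdGaussian d)) ^ ((ℓ : ℝ)⁻¹)
      ≤ ENNReal.ofReal (Υ + 2 * ((ℓ : ℝ) - 1) * L) ∧
    (∫⁻ p : Euc d, ENNReal.ofReal ((⟪p, Matrix.toEuclideanLin H p⟫) ^ ℓ)
        ∂(stdGaussian d)) ^ ((ℓ : ℝ)⁻¹)
      ≤ ENNReal.ofReal (L * ((d : ℝ) + 2 * (ℓ : ℝ) - 2)) := by
  classical
  have hL0 : (0:ℝ) ≤ L := le_trans (norm_nonneg _) hop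
  have htr0 : 0 ≤ H.trace := GQF.trace_nonneg' hpsd
  have hY0 : 0 ≤ Υ := le_trans htr0 htr
  have hdL : H.trace ≤ (d:ℝ) * L := GQF.trace_le_dL hop
  have hl1 : (1:ℝ) ≤ (ℓ:ℝ) := by exact_mod_cast hℓ
  have hcast : ((ℓ-1:ℕ):ℝ) = (ℓ:ℝ)-1 := by
    rw [Nat.cast_sub hℓ, Nat.cast_one]
  have hmeq : ∀ x : Fin d → ℝ,
      (⟪(EuclideanSpace.equiv (Fin d) ℝ).symm x,
        Matrix.toEuclideanLin H ((EuclideanSpace.equiv (Fin d) ℝ).symm x)⟫ : ℝ)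
      = MvPolynomial.eval x (GQF.Qp H) := by
    intro x
    rw [GQF.eval_Qp, ← GQF.inner_eq_dot]
    rfl
  set T := LinearMap.toContinuousLinearMap (Matrix.toEuclideanLin H) with hTdef
  have hcont : Continuous fun p : Euc d => (⟪p, Matrix.toEuclideanLin H p⟫ : ℝ) := by
    have he : (fun p : Euc d => (⟪p, Matrix.toEuclideanLin H p⟫ : ℝ))
        = fun p => (⟪p, T p⟫ : ℝ) := by
      funext p
      rw [hTdef, LinearMap.coe_toContinuousLinearMap']
    rw [he]
    exact continuous_id.inner T.continuous
  have hf : Measurable fun p : Euc d =>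
      ENNReal.ofReal ((⟪p, Matrix.toEuclideanLin H p⟫ : ℝ) ^ ℓ) :=
    ENNReal.measurable_ofReal.comp ((hcont.pow ℓ).measurable)
  have hg : Measurable ⇑(EuclideanSpace.equiv (Fin d) ℝ).symm :=
    (EuclideanSpace.equiv (Fin d) ℝ).symm.continuous.measurable
  have hlin : (∫⁻ p : Euc d, ENNReal.ofReal ((⟪p, Matrix.toEuclideanLin H p⟫) ^ ℓ)
      ∂(stdGaussian d)) = ENNReal.ofReal (GQF.Ig (GQF.Qp H ^ ℓ)) := by
    have h0 : stdGaussian d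
        = Measure.map (⇑(EuclideanSpace.equiv (Fin d) ℝ).symm) (GQF.μpi d) := rfl
    rw [h0, lintegral_map hf hg]
    have h1 : ∀ x : Fin d → ℝ,
        ENNReal.ofReal ((⟪(EuclideanSpace.equiv (Fin d) ℝ).symm x,
          Matrix.toEuclideanLin H ((EuclideanSpace.equiv (Fin d) ℝ).symm x)⟫ : ℝ) ^ ℓ)
        = ENNReal.ofReal (MvPolynomial.eval x (GQF.Qp H ^ ℓ)) := by
      intro x
      rw [hmeq x, map_pow]
    simp_rw [h1]
    rw [← MeasureTheory.ofReal_integral_eq_lintegral_ofReal (GQF.integrable_eval _)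
      (Filter.Eventually.of_forall fun x => ?_)]
    · rfl
    · show (0:ℝ) ≤ MvPolynomial.eval x (GQF.Qp H ^ ℓ)
      rw [map_pow, GQF.eval_Qp]
      exact pow_nonneg (GQF.psd0 hpsd x) ℓ
  have final : ∀ B : ℝ, 0 ≤ B → GQF.Ig (GQF.Qp H ^ ℓ) ≤ B^ℓ →
      (ENNReal.ofReal (GQF.Ig (GQF.Qp H ^ ℓ))) ^ ((ℓ:ℝ)⁻¹) ≤ ENNReal.ofReal B := by
    intro B hB hle
    have h1 : ENNReal.ofReal (GQF.Ig (GQF.Qp H ^ ℓ)) ≤ (ENNReal.ofReal B)^ℓ := by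
      rw [← ENNReal.ofReal_pow hB]
      exact ENNReal.ofReal_le_ofReal hle
    have h2 := ENNReal.rpow_le_rpow h1 (by positivity : (0:ℝ) ≤ (ℓ:ℝ)⁻¹)
    have hne : (ℓ:ℝ) ≠ 0 := by positivity
    calc (ENNReal.ofReal (GQF.Ig (GQF.Qp H ^ ℓ))) ^ ((ℓ:ℝ)⁻¹)
        ≤ ((ENNReal.ofReal B)^ℓ) ^ ((ℓ:ℝ)⁻¹) := h2
      _ = ENNReal.ofReal B := by
          rw [← ENNReal.rpow_natCast (ENNReal.ofReal B) ℓ, ← ENNReal.rpow_mul,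
            mul_inv_cancel₀ hne, ENNReal.rpow_one]
  constructor
  · rw [hlin]
    refine final _ (by nlinarith) ?_
    have hb := GQF.pow_bound hsymm hpsd hop hL0 Υ hY0 htr ℓ
    rwa [hcast] at hb
  · rw [hlin]
    have hB2 : ENNReal.ofReal (L * ((d:ℝ) + 2*(ℓ:ℝ) - 2))
        = ENNReal.ofReal ((d:ℝ)*L + 2*((ℓ:ℝ)-1)*L) := by
      congr 1
      ring
    rw [hB2]
    refine final _ (by nlinarith) ?_
    have hb := GQF.pow_bound hsymm hpsd hop hL0 ((d:ℝ)*L) (by positivity) hdL ℓ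
    rwa [hcast] at hb
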